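/- Let ν_1 ≠ ν_2 be positive reals and let P, Q be Student's t-distributions with ν_1 and ν_2 degrees of freedom respectively. Then W_∞(P, Q) = ∞. -/

import Mathlib

open MeasureTheory ENNReal

/-- Student's t-distribution with `ν` degrees of freedom, given by its density
`Γ((ν+1)/2)/(√(νπ) Γ(ν/2)) (1 + x²/ν)^{-(ν+1)/2}` w.r.t. Lebesgue measure. -/
noncomputable def studentTMeasure (ν : ℝ) : Measure ℝ :=
  volume.withDensity (fun x => ENNReal.ofReal
    (Real.Gamma ((ν + 1) / 2) / (Real.sqrt (ν * Real.pi) * Real.Gamma (ν / 2))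
      * (1 + x ^ 2 / ν) ^ (-(ν + 1) / 2)))

/-- `W∞(P,Q) = inf {ε > 0 : P(A) ≤ Q(A^ε) for all Borel A}`, where `A^ε` is the
open `ε`-enlargement of `A`; the infimum of the empty set is `∞`. -/
noncomputable def WInf (P Q : Measure ℝ) : ℝ≥0∞ :=
  ⨅ (ε : ℝ) (_ : 0 < ε)
    (_ : ∀ A : Set ℝ, MeasurableSet A → P A ≤ Q (Metric.thickening ε A)),
    ENNReal.ofReal ε

namespace StudentTAux
open Set


/-- normalization constant -/
noncomputable def c (ν : ℝ) : ℝ :=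
  Real.Gamma ((ν + 1) / 2) / (Real.sqrt (ν * Real.pi) * Real.Gamma (ν / 2))

lemma c_pos {ν : ℝ} (hν : 0 < ν) : 0 < c ν := by
  have h1 : 0 < Real.Gamma ((ν + 1) / 2) := Real.Gamma_pos_of_pos (by linarith)
  have h2 : 0 < Real.Gamma (ν / 2) := Real.Gamma_pos_of_pos (by linarith)
  have h3 : 0 < Real.sqrt (ν * Real.pi) :=
    Real.sqrt_pos.2 (by positivity)
  exact div_pos h1 (by positivity)

lemma density_measurable (ν : ℝ) :
    Measurable fun x : ℝ => ENNReal.ofReal (c ν * (1 + x ^ 2 / ν) ^ (-(ν + 1) / 2)) := by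
  fun_prop

lemma studentT_apply {ν : ℝ} {S : Set ℝ} (hS : MeasurableSet S) :
    studentTMeasure ν S = ∫⁻ x in S, ENNReal.ofReal (c ν * (1 + x ^ 2 / ν) ^ (-(ν + 1) / 2)) := by
  rw [studentTMeasure, withDensity_apply _ hS]; rfl

lemma base_pos {ν : ℝ} (hν : 0 < ν) (x : ℝ) : 0 < 1 + x ^ 2 / ν := by positivity

/-- Pointwise tail comparison: for `x > 0`,
`(1+x²/ν)^{-(ν+1)/2} ≤ ν^{(ν+1)/2} * x^{-(ν+1)}`. -/
lemma density_le {ν x : ℝ} (hν : 0 < ν) (hx : 0 < x) :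
    (1 + x ^ 2 / ν) ^ (-(ν + 1) / 2) ≤ ν ^ ((ν + 1) / 2) * x ^ (-(ν + 1)) := by
  have hx2 : (0:ℝ) < x ^ 2 / ν := by positivity
  have h1 : (1 + x ^ 2 / ν) ^ (-(ν + 1) / 2) ≤ (x ^ 2 / ν) ^ (-(ν + 1) / 2) :=
    Real.rpow_le_rpow_of_nonpos hx2 (by linarith) (by linarith)
  refine h1.trans_eq ?_
  rw [Real.div_rpow (by positivity) hν.le, div_eq_mul_inv, mul_comm,
    ← Real.rpow_neg hν.le, neg_div, neg_neg]
  congr 1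
  rw [← Real.rpow_natCast x 2, ← Real.rpow_mul hx.le]
  norm_num
  ring_nf

/-- Pointwise lower bound: for `x ≥ √ν`,
`(2/ν)^{-(ν+1)/2} * x^{-(ν+1)} ≤ (1+x²/ν)^{-(ν+1)/2}`. -/
lemma density_ge {ν x : ℝ} (hν : 0 < ν) (hx : Real.sqrt ν ≤ x) :
    (2 / ν) ^ (-(ν + 1) / 2) * x ^ (-(ν + 1)) ≤ (1 + x ^ 2 / ν) ^ (-(ν + 1) / 2) := by
  have hx0 : 0 < x := lt_of_lt_of_le (Real.sqrt_pos.2 hν) hx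
  have hxν : ν ≤ x ^ 2 := by
    have := Real.sqrt_le_sqrt (le_refl ν)
    nlinarith [Real.sq_sqrt hν.le, sq_nonneg (x - Real.sqrt ν), Real.sqrt_nonneg ν]
  have h2 : 1 + x ^ 2 / ν ≤ 2 * x ^ 2 / ν := by
    have h5 : 1 ≤ x ^ 2 / ν := (one_le_div hν).2 hxν
    have h4 : 2 * x ^ 2 / ν = x ^ 2 / ν + x ^ 2 / ν := by ring
    linarith
  have h1 : (2 * x ^ 2 / ν) ^ (-(ν + 1) / 2) ≤ (1 + x ^ 2 / ν) ^ (-(ν + 1) / 2) :=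
    Real.rpow_le_rpow_of_nonpos (by positivity) h2 (by linarith)
  refine le_trans (le_of_eq ?_) h1
  rw [show 2 * x ^ 2 / ν = (2 / ν) * x ^ 2 by ring,
    Real.mul_rpow (by positivity) (by positivity)]
  congr 1
  rw [← Real.rpow_natCast x 2, ← Real.rpow_mul hx0.le]
  norm_num
  ring_nf


noncomputable def Cu (ν : ℝ) : ℝ := c ν * ν ^ ((ν + 1) / 2) / ν
noncomputable def Cl (ν : ℝ) : ℝ := c ν * (2 / ν) ^ (-(ν + 1) / 2) / ν

lemma Cu_pos {ν : ℝ} (hν : 0 < ν) : 0 < Cu ν := by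
  have := c_pos hν; unfold Cu; positivity

lemma Cl_pos {ν : ℝ} (hν : 0 < ν) : 0 < Cl ν := by
  have := c_pos hν; unfold Cl; positivity

lemma integral_tail {ν t : ℝ} (hν : 0 < ν) (ht : 0 < t) :
    ∫ x in Ioi t, x ^ (-(ν + 1)) = t ^ (-ν) / ν := by
  rw [integral_Ioi_rpow_of_lt (by linarith) ht]
  rw [show -(ν + 1) + 1 = -ν by ring]
  field_simp

lemma tail_upper {ν t : ℝ} (hν : 0 < ν) (ht : 0 < t) :
    studentTMeasure ν (Ioi t) ≤ ENNReal.ofReal (Cu ν * t ^ (-ν)) := by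
  rw [studentT_apply measurableSet_Ioi]
  have hint : IntegrableOn (fun x : ℝ => c ν * ν ^ ((ν + 1) / 2) * x ^ (-(ν + 1))) (Ioi t) :=
    (integrableOn_Ioi_rpow_of_lt (by linarith) ht).const_mul _
  calc ∫⁻ x in Ioi t, ENNReal.ofReal (c ν * (1 + x ^ 2 / ν) ^ (-(ν + 1) / 2))
      ≤ ∫⁻ x in Ioi t, ENNReal.ofReal (c ν * ν ^ ((ν + 1) / 2) * x ^ (-(ν + 1))) := by
        refine setLIntegral_mono' measurableSet_Ioi fun x hx => ?_
        refine ENNReal.ofReal_le_ofReal ?_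
        rw [mul_assoc]
        exact mul_le_mul_of_nonneg_left (density_le hν (ht.trans hx)) (c_pos hν).le
    _ = ENNReal.ofReal (∫ x in Ioi t, c ν * ν ^ ((ν + 1) / 2) * x ^ (-(ν + 1))) := by
        rw [ofReal_integral_eq_lintegral_ofReal hint]
        filter_upwards [ae_restrict_mem measurableSet_Ioi] with x hx
        have := c_pos hν
        have hx0 : (0:ℝ) < x := ht.trans hx
        positivity
    _ = ENNReal.ofReal (Cu ν * t ^ (-ν)) := by
        rw [integral_const_mul _, integral_tail hν ht, Cu]
        ring_nf

lemma tail_lower {ν t : ℝ} (hν : 0 < ν) (ht : Real.sqrt ν ≤ t) :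
    ENNReal.ofReal (Cl ν * t ^ (-ν)) ≤ studentTMeasure ν (Ioi t) := by
  have ht0 : 0 < t := lt_of_lt_of_le (Real.sqrt_pos.2 hν) ht
  rw [studentT_apply measurableSet_Ioi]
  have hint : IntegrableOn (fun x : ℝ => c ν * (2 / ν) ^ (-(ν + 1) / 2) * x ^ (-(ν + 1))) (Ioi t) :=
    (integrableOn_Ioi_rpow_of_lt (by linarith) ht0).const_mul _
  calc ENNReal.ofReal (Cl ν * t ^ (-ν))
      = ENNReal.ofReal (∫ x in Ioi t, c ν * (2 / ν) ^ (-(ν + 1) / 2) * x ^ (-(ν + 1))) := by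
        rw [integral_const_mul _, integral_tail hν ht0, Cl]
        ring_nf
    _ = ∫⁻ x in Ioi t, ENNReal.ofReal (c ν * (2 / ν) ^ (-(ν + 1) / 2) * x ^ (-(ν + 1))) := by
        rw [ofReal_integral_eq_lintegral_ofReal hint]
        filter_upwards [ae_restrict_mem measurableSet_Ioi] with x hx
        have := c_pos hν
        have hx0 : (0:ℝ) < x := ht0.trans hx
        positivity
    _ ≤ ∫⁻ x in Ioi t, ENNReal.ofReal (c ν * (1 + x ^ 2 / ν) ^ (-(ν + 1) / 2)) := by
        refine setLIntegral_mono' measurableSet_Ioi fun x hx => ?_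
        refine ENNReal.ofReal_le_ofReal ?_
        rw [mul_assoc]
        exact mul_le_mul_of_nonneg_left (density_ge hν (ht.trans hx.le)) (c_pos hν).le


/-- Linchpin: `Γ(s) (1+x²/ν)^{-s} = ∫_0^∞ t^{s-1} e^{-(1+x²/ν)t} dt`. -/
lemma gamma_rep {ν s : ℝ} (hν : 0 < ν) (hs : 0 < s) (x : ℝ) :
    ENNReal.ofReal (Real.Gamma s) * ENNReal.ofReal ((1 + x ^ 2 / ν) ^ (-s)) =
      ∫⁻ t in Ioi (0:ℝ), ENNReal.ofReal (t ^ (s - 1) * Real.exp (-((1 + x ^ 2 / ν) * t))) := by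
  set a : ℝ := 1 + x ^ 2 / ν with ha_def
  have ha : 0 < a := by positivity
  have hint : IntegrableOn (fun t : ℝ => t ^ (s - 1) * Real.exp (-(a * t))) (Ioi 0) := by
    have := integrableOn_rpow_mul_exp_neg_mul_rpow (p := 1) (s := s - 1) (b := a)
      (by linarith) one_pos ha
    simpa [Real.rpow_one, neg_mul] using this
  rw [← ofReal_integral_eq_lintegral_ofReal hint ?_]
  · rw [Real.integral_rpow_mul_exp_neg_mul_Ioi hs ha, ← ENNReal.ofReal_mul (Real.Gamma_pos_of_pos hs).le]
    congr 1
    rw [Real.rpow_neg ha.le, ← Real.inv_rpow ha.le, ← one_div]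
    ring
  · filter_upwards [ae_restrict_mem measurableSet_Ioi] with t ht
    have := Real.exp_pos (-(a * t))
    have ht0 : (0:ℝ) < t := ht
    positivity

/-- The unnormalized mass integral. -/
lemma lintegral_density {ν : ℝ} (hν : 0 < ν) :
    ∫⁻ x : ℝ, ENNReal.ofReal ((1 + x ^ 2 / ν) ^ (-(ν + 1) / 2)) =
      ENNReal.ofReal (Real.sqrt (ν * Real.pi) * Real.Gamma (ν / 2) / Real.Gamma ((ν + 1) / 2)) := by
  set s : ℝ := (ν + 1) / 2 with hs_def
  have hs : 0 < s := by rw [hs_def]; linarith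
  have hs2 : 0 < s - 1/2 := by rw [hs_def]; linarith
  have hΓs : 0 < Real.Gamma s := Real.Gamma_pos_of_pos hs
  have hexp : -(ν + 1) / 2 = -s := by rw [hs_def]; ring
  rw [hexp]
  set T := ∫⁻ x : ℝ, ENNReal.ofReal ((1 + x ^ 2 / ν) ^ (-s)) with hT
  -- multiply by Γ(s)
  have hmeas : Measurable fun x : ℝ => ENNReal.ofReal ((1 + x ^ 2 / ν) ^ (-s)) := by fun_prop
  have key : ENNReal.ofReal (Real.Gamma s) * T
      = ENNReal.ofReal (Real.sqrt (ν * Real.pi) * Real.Gamma (ν / 2)) := by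
    rw [hT, ← lintegral_const_mul _ hmeas]
    have step1 : ∫⁻ x : ℝ, ENNReal.ofReal (Real.Gamma s) * ENNReal.ofReal ((1 + x ^ 2 / ν) ^ (-s))
        = ∫⁻ x : ℝ, ∫⁻ t in Ioi (0:ℝ),
            ENNReal.ofReal (t ^ (s - 1) * Real.exp (-((1 + x ^ 2 / ν) * t))) := by
      exact lintegral_congr fun x => gamma_rep hν hs x
    rw [step1]
    rw [lintegral_lintegral_swap (by fun_prop)]
    have step2 : ∫⁻ t in Ioi (0:ℝ), ∫⁻ x : ℝ,
          ENNReal.ofReal (t ^ (s - 1) * Real.exp (-((1 + x ^ 2 / ν) * t)))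
        = ∫⁻ t in Ioi (0:ℝ),
            ENNReal.ofReal (Real.sqrt (ν * Real.pi) * (t ^ (ν/2 - 1) * Real.exp (-t))) := by
      refine setLIntegral_congr_fun measurableSet_Ioi ?_
      intro t ht
      have ht0 : (0:ℝ) < t := ht
      have hb : 0 < t / ν := by positivity
      -- inner Gaussian integral
      have hig : Integrable (fun x : ℝ => t ^ (s - 1) * Real.exp (-t) *
          Real.exp (-(t / ν) * x ^ 2)) := (integrable_exp_neg_mul_sq hb).const_mul _
      have hrw : ∀ x : ℝ, t ^ (s - 1) * Real.exp (-((1 + x ^ 2 / ν) * t))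
          = t ^ (s - 1) * Real.exp (-t) * Real.exp (-(t / ν) * x ^ 2) := by
        intro x
        rw [mul_assoc, ← Real.exp_add]
        congr 2
        field_simp
        ring
      simp_rw [hrw]
      rw [← ofReal_integral_eq_lintegral_ofReal hig ?_]
      · rw [integral_const_mul _ _, integral_gaussian]
        congr 1
        have h1 : Real.sqrt (Real.pi / (t / ν)) = Real.sqrt (ν * Real.pi) * t ^ (-(1:ℝ)/2) := by
          rw [show Real.pi / (t / ν) = (ν * Real.pi) / t by field_simp,
            Real.sqrt_div' _ (by positivity), div_eq_mul_inv]
          congr 1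
          rw [Real.sqrt_eq_rpow, ← Real.rpow_neg ht0.le]
          norm_num
        rw [h1, Real.rpow_sub ht0, Real.rpow_sub ht0]
        rw [hs_def]
        rw [show (ν + 1) / 2 = ν/2 + 1/2 by ring, Real.rpow_add ht0]
        have : t ^ (-(1:ℝ)/2) = (t ^ ((1:ℝ)/2))⁻¹ := by
          rw [neg_div, Real.rpow_neg ht0.le]
        rw [this, Real.rpow_one]
        field_simp
      · filter_upwards with x
        have := Real.exp_pos (-t)
        positivity
    rw [step2]
    have hmeas2 : Measurable fun t : ℝ => ENNReal.ofReal (t ^ (ν/2 - 1) * Real.exp (-t)) := by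
      fun_prop
    simp_rw [ENNReal.ofReal_mul (Real.sqrt_nonneg _)]
    rw [lintegral_const_mul _ hmeas2]
    have hΓ2 : ∫⁻ t in Ioi (0:ℝ), ENNReal.ofReal (t ^ (ν/2 - 1) * Real.exp (-t))
        = ENNReal.ofReal (Real.Gamma (ν / 2)) := by
      have hint : IntegrableOn (fun t : ℝ => t ^ (ν/2 - 1) * Real.exp (-(1 * t))) (Ioi 0) := by
        have := integrableOn_rpow_mul_exp_neg_mul_rpow (p := 1) (s := ν/2 - 1) (b := 1)
          (by linarith) one_pos one_pos
        simpa [Real.rpow_one, neg_mul] using this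
      have hint' : IntegrableOn (fun t : ℝ => t ^ (ν/2 - 1) * Real.exp (-t)) (Ioi 0) := by
        simpa using hint
      rw [← ofReal_integral_eq_lintegral_ofReal hint' ?_]
      · congr 1
        have := Real.integral_rpow_mul_exp_neg_mul_Ioi (a := ν/2) (r := (1:ℝ)) (by linarith) one_pos
        simp only [one_mul] at this
        rw [this]
        simp
      · filter_upwards [ae_restrict_mem measurableSet_Ioi] with t ht
        have ht0 : (0:ℝ) < t := ht
        have := Real.exp_pos (-t)
        positivity
    rw [hΓ2, ← ENNReal.ofReal_mul (Real.sqrt_nonneg _)]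
  -- cancel Γ(s)
  have h2 : ENNReal.ofReal (Real.Gamma s) *
      ENNReal.ofReal (Real.sqrt (ν * Real.pi) * Real.Gamma (ν / 2) / Real.Gamma s)
      = ENNReal.ofReal (Real.sqrt (ν * Real.pi) * Real.Gamma (ν / 2)) := by
    rw [← ENNReal.ofReal_mul hΓs.le, mul_div_cancel₀ _ hΓs.ne']
  have := key.trans h2.symm
  exact (ENNReal.mul_right_inj (by simpa using hΓs) ofReal_ne_top).1 this

/-- The Student t measure is a probability measure. -/
lemma mass {ν : ℝ} (hν : 0 < ν) : studentTMeasure ν Set.univ = 1 := by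
  rw [studentT_apply MeasurableSet.univ, Measure.restrict_univ]
  have hc := c_pos hν
  simp_rw [ENNReal.ofReal_mul hc.le]
  rw [lintegral_const_mul _ (by fun_prop), lintegral_density hν,
    ← ENNReal.ofReal_mul hc.le]
  rw [show c ν * (Real.sqrt (ν * Real.pi) * Real.Gamma (ν / 2) / Real.Gamma ((ν + 1) / 2)) = 1 by
    have h1 : 0 < Real.Gamma ((ν + 1) / 2) := Real.Gamma_pos_of_pos (by linarith)
    have h2 : 0 < Real.Gamma (ν / 2) := Real.Gamma_pos_of_pos (by linarith)
    have h3 : 0 < Real.sqrt (ν * Real.pi) := Real.sqrt_pos.2 (by positivity)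
    rw [c]
    field_simp]
  exact ofReal_one


/-- The heavier tail eventually dominates the lighter one, even with an offset `δ`. -/
lemma key {νh νl : ℝ} (hh : 0 < νh) (hlt : νh < νl) {δ : ℝ} (hδ : 0 ≤ δ) :
    ∃ r : ℝ, 0 < r ∧
      studentTMeasure νl (Ioi r) < studentTMeasure νh (Ici (r + δ)) := by
  have hl : 0 < νl := hh.trans hlt
  set B : ℝ := 2 ^ νh * Cu νl / Cl νh with hB_def
  have hB : 0 < B := by
    have := Cu_pos hl; have := Cl_pos hh
    positivity
  set K : ℝ := B ^ (νl - νh)⁻¹ with hK_def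
  have hK : 0 ≤ K := Real.rpow_nonneg hB.le _
  set r : ℝ := max (max 1 (Real.sqrt νh)) (max δ (K + 1)) with hr_def
  have hr1 : (1:ℝ) ≤ r := le_trans (le_max_left _ _) (le_max_left _ _)
  have hr0 : 0 < r := lt_of_lt_of_le one_pos hr1
  have hrs : Real.sqrt νh ≤ r := le_trans (le_max_right _ _) (le_max_left _ _)
  have hrδ : δ ≤ r := le_trans (le_max_left _ _) (le_max_right _ _)
  have hrK : K < r :=
    lt_of_lt_of_le (lt_add_one K) (le_trans (le_max_right _ _) (le_max_right _ _))
  have ha : B < r ^ (νl - νh) := by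
    have h1 : K ^ (νl - νh) < r ^ (νl - νh) :=
      Real.rpow_lt_rpow hK hrK (by linarith)
    have h2 : K ^ (νl - νh) = B := Real.rpow_inv_rpow hB.le (by linarith)
    linarith
  have hmain : Cu νl * r ^ (-νl) < Cl νh * (r + δ) ^ (-νh) := by
    have h2pos : (0:ℝ) < 2 ^ νh := Real.rpow_pos_of_pos two_pos _
    have hClp := Cl_pos hh
    have e1 : Cu νl * r ^ (-νl) = Cl νh * ((2:ℝ) ^ νh)⁻¹ * B * r ^ (-νl) := by
      rw [hB_def]; field_simp
    have e2 : Cl νh * ((2:ℝ) ^ νh)⁻¹ * B * r ^ (-νl)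
        < Cl νh * ((2:ℝ) ^ νh)⁻¹ * r ^ (νl - νh) * r ^ (-νl) := by
      have hpos : 0 < Cl νh * ((2:ℝ) ^ νh)⁻¹ := by positivity
      have := mul_lt_mul_of_pos_left ha hpos
      exact mul_lt_mul_of_pos_right (by linarith [this]) (Real.rpow_pos_of_pos hr0 _)
    have e3 : Cl νh * ((2:ℝ) ^ νh)⁻¹ * r ^ (νl - νh) * r ^ (-νl)
        = Cl νh * ((2:ℝ) ^ νh)⁻¹ * r ^ (-νh) := by
      rw [mul_assoc, ← Real.rpow_add hr0]
      ring_nf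
    have e4 : Cl νh * ((2:ℝ) ^ νh)⁻¹ * r ^ (-νh) ≤ Cl νh * (r + δ) ^ (-νh) := by
      have h2r : r + δ ≤ 2 * r := by linarith
      have hrδ0 : 0 < r + δ := by linarith
      have hstep : (2 * r) ^ (-νh) ≤ (r + δ) ^ (-νh) :=
        Real.rpow_le_rpow_of_nonpos hrδ0 h2r (by linarith)
      have hmul : ((2:ℝ) * r) ^ (-νh) = ((2:ℝ) ^ νh)⁻¹ * r ^ (-νh) := by
        rw [Real.mul_rpow (by norm_num) hr0.le, Real.rpow_neg (by norm_num : (0:ℝ) ≤ 2)]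
      rw [mul_assoc, ← hmul]
      exact mul_le_mul_of_nonneg_left hstep hClp.le
    calc Cu νl * r ^ (-νl) = Cl νh * ((2:ℝ) ^ νh)⁻¹ * B * r ^ (-νl) := e1
      _ < Cl νh * ((2:ℝ) ^ νh)⁻¹ * r ^ (νl - νh) * r ^ (-νl) := e2
      _ = Cl νh * ((2:ℝ) ^ νh)⁻¹ * r ^ (-νh) := e3
      _ ≤ Cl νh * (r + δ) ^ (-νh) := e4
  refine ⟨r, hr0, ?_⟩
  calc studentTMeasure νl (Ioi r) ≤ ENNReal.ofReal (Cu νl * r ^ (-νl)) := tail_upper hl hr0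
    _ < ENNReal.ofReal (Cl νh * (r + δ) ^ (-νh)) := by
        refine (ENNReal.ofReal_lt_ofReal_iff ?_).2 hmain
        have := Cl_pos hh
        have : (0:ℝ) < (r + δ) ^ (-νh) := Real.rpow_pos_of_pos (by linarith) _
        positivity
    _ ≤ studentTMeasure νh (Ioi (r + δ)) := tail_lower hh (by linarith)
    _ ≤ studentTMeasure νh (Ici (r + δ)) := measure_mono Ioi_subset_Ici_self

lemma not_cond {ν₁ ν₂ : ℝ} (h₁ : 0 < ν₁) (h₂ : 0 < ν₂) (hne : ν₁ ≠ ν₂)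
    {ε : ℝ} (hε : 0 < ε) :
    ¬ ∀ A : Set ℝ, MeasurableSet A →
        studentTMeasure ν₁ A ≤ studentTMeasure ν₂ (Metric.thickening ε A) := by
  intro hcond
  rcases lt_or_gt_of_ne hne with hlt | hgt
  · -- ν₁ heavier; use A = Ici (r + ε)
    obtain ⟨r, hr0, hkey⟩ := key h₁ hlt hε.le
    have hsub : Metric.thickening ε (Ici (r + ε)) ⊆ Ioi r := by
      intro x hx
      rw [Metric.mem_thickening_iff] at hx
      obtain ⟨y, hy, hxy⟩ := hx
      rw [Real.dist_eq] at hxy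
      have := abs_lt.1 hxy
      simp only [mem_Ici] at hy
      exact mem_Ioi.2 (by linarith [this.1, this.2])
    have hc := hcond (Ici (r + ε)) measurableSet_Ici
    have h2 : studentTMeasure ν₂ (Metric.thickening ε (Ici (r + ε)))
        ≤ studentTMeasure ν₂ (Ioi r) := measure_mono hsub
    exact absurd (hc.trans h2) (not_le.2 hkey)
  · -- ν₂ heavier; use A = Iic r
    obtain ⟨r, hr0, hkey⟩ := key h₂ hgt hε.le
    have hsub : Metric.thickening ε (Iic r) ⊆ Iio (r + ε) := by
      intro x hx
      rw [Metric.mem_thickening_iff] at hx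
      obtain ⟨y, hy, hxy⟩ := hx
      rw [Real.dist_eq] at hxy
      have := abs_lt.1 hxy
      simp only [mem_Iic] at hy
      exact mem_Iio.2 (by linarith [this.1, this.2])
    have hc := hcond (Iic r) measurableSet_Iic
    have hle : studentTMeasure ν₁ (Iic r) ≤ studentTMeasure ν₂ (Iio (r + ε)) :=
      hc.trans (measure_mono hsub)
    have m1 : studentTMeasure ν₁ (Iic r) + studentTMeasure ν₁ (Ioi r) = 1 := by
      have := measure_add_measure_compl (μ := studentTMeasure ν₁) (measurableSet_Iic (a := r))
      rwa [compl_Iic, mass h₁] at this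
    have m2 : studentTMeasure ν₂ (Iio (r + ε)) + studentTMeasure ν₂ (Ici (r + ε)) = 1 := by
      have := measure_add_measure_compl (μ := studentTMeasure ν₂) (measurableSet_Iio (a := r + ε))
      rwa [compl_Iio, mass h₂] at this
    have hfin : studentTMeasure ν₁ (Iic r) ≠ ∞ := by
      refine ne_of_lt (lt_of_le_of_lt (measure_mono (subset_univ _)) ?_)
      rw [mass h₁]; exact one_lt_top
    have hcontr : (1:ℝ≥0∞) < 1 := by
      calc (1:ℝ≥0∞) = studentTMeasure ν₁ (Iic r) + studentTMeasure ν₁ (Ioi r) := m1.symm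
        _ < studentTMeasure ν₁ (Iic r) + studentTMeasure ν₂ (Ici (r + ε)) :=
            ENNReal.add_lt_add_left hfin hkey
        _ ≤ studentTMeasure ν₂ (Iio (r + ε)) + studentTMeasure ν₂ (Ici (r + ε)) :=
            add_le_add_left hle _
        _ = 1 := m2
    exact absurd hcontr (lt_irrefl _)

end StudentTAux

/-- Student's t-distributions with different degrees of freedom are at infinite
`W∞` distance. -/
theorem WInf_studentT_eq_top (ν₁ ν₂ : ℝ) (h₁ : 0 < ν₁) (h₂ : 0 < ν₂)
    (hne : ν₁ ≠ ν₂) :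
    WInf (studentTMeasure ν₁) (studentTMeasure ν₂) = ∞ := by
  rw [WInf, iInf_eq_top]
  intro ε
  rw [iInf_eq_top]
  intro hε
  rw [iInf_eq_top]
  intro hcond
  exact absurd hcond (StudentTAux.not_cond h₁ h₂ hne hε)
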